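/- Post-detection confidence set for the post-change parameter: let C be any random subset of {1,…,τ}, measurable with respect to the data and auxiliary randomness, such that P_{θ₀,T,θ₁}(T ∈ C | τ ≥ T) ≥ 1 − α for all θ₀ ∈ Θ₀, θ₁ ∈ Θ₁, and T ∈ ℕ with P_{θ₀,∞}(τ ≥ T) > 0, where τ satisfies Assumption 1. Then for every η₁ ∈ (0,1) and every T ∈ ℕ, P_{θ₀,T,θ₁}( θ₁ ∈ ⋃_{t∈C} CS(X_t,…,X_τ; 1 − η₁ r_t*) | τ ≥ T ) ≥ 1 − α − η₁. -/

import Mathlib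

open MeasureTheory ProbabilityTheory Filter Set
open scoped ENNReal NNReal

namespace SeqChange

variable {𝒳 : Type*} [MeasurableSpace 𝒳]

/-- The σ-algebra on the sequence space generated by the coordinates with indices in `s`. -/
def coordSigma (𝒳 : Type*) [MeasurableSpace 𝒳] (s : Set ℕ) : MeasurableSpace (ℕ → 𝒳) :=
  ⨆ i ∈ s, MeasurableSpace.comap (fun ω : ℕ → 𝒳 => ω i) inferInstance

/-- The natural filtration `σ(X₁, …, Xₙ)` of the observation sequence (observations are
indexed from 1; coordinate 0 is unused). -/
def natFilt (𝒳 : Type*) [MeasurableSpace 𝒳] (n : ℕ) : MeasurableSpace (ℕ → 𝒳) :=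
  coordSigma 𝒳 {i | 1 ≤ i ∧ i ≤ n}

/-- `τ` is a stopping time with respect to the natural filtration of the observation
sequence, taking values in `ℕ ∪ {∞}`. -/
def IsStoppingTimeSeq (τ : (ℕ → 𝒳) → ℕ∞) : Prop :=
  ∀ n : ℕ, MeasurableSet[natFilt 𝒳 n] {ω | τ ω ≤ (n : ℕ∞)}

/-- `P` is the joint law of a sequence of independent observations `X₁, X₂, …` with
`Xₙ ~ ν n` for every `n ≥ 1`: a probability measure whose finite-dimensional
distributions on the coordinates with indices `≥ 1` are the corresponding products. -/
def IsProductLaw (P : Measure (ℕ → 𝒳)) (ν : ℕ → Measure 𝒳) : Prop :=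
  IsProbabilityMeasure P ∧
    ∀ s : Finset ℕ, (∀ i ∈ s, 1 ≤ i) → ∀ A : ℕ → Set 𝒳, (∀ i, MeasurableSet (A i)) →
      P {ω | ∀ i ∈ s, ω i ∈ A i} = ∏ i ∈ s, ν i (A i)

/-- `P` is the law `P_{F₀,T,F₁}`: independent coordinates, `Xₙ ~ F₀` for `n < T` and
`Xₙ ~ F₁` for `n ≥ T`. -/
def IsChangeLaw (P : Measure (ℕ → 𝒳)) (F₀ F₁ : Measure 𝒳) (T : ℕ) : Prop :=
  IsProductLaw P (fun n => if n < T then F₀ else F₁)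

/-- `P` is the law `P_{F₀,∞}`: all coordinates i.i.d. `F₀` (no change ever occurs). -/
def IsNoChangeLaw (P : Measure (ℕ → 𝒳)) (F₀ : Measure 𝒳) : Prop :=
  IsProductLaw P (fun _ => F₀)

/-- Under `Q`, the coordinates with indices in `I` are i.i.d. with law `ν`. -/
def IsIIDOn (Q : Measure (ℕ → 𝒳)) (ν : Measure 𝒳) (I : Set ℕ) : Prop :=
  IsProbabilityMeasure Q ∧
    ∀ s : Finset ℕ, (↑s ⊆ I) → ∀ A : ℕ → Set 𝒳, (∀ i, MeasurableSet (A i)) →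
      Q {ω | ∀ i ∈ s, ω i ∈ A i} = ∏ i ∈ s, ν (A i)

/-- Forward filtration `σ(X_t, …, X_n)`. -/
def fwdFilt (𝒳 : Type*) [MeasurableSpace 𝒳] (t n : ℕ) : MeasurableSpace (ℕ → 𝒳) :=
  coordSigma 𝒳 {i | t ≤ i ∧ i ≤ n}

/-- Backward filtration `σ(X_n, …, X_{t-1})`. -/
def bwdFilt (𝒳 : Type*) [MeasurableSpace 𝒳] (t n : ℕ) : MeasurableSpace (ℕ → 𝒳) :=
  coordSigma 𝒳 {i | n ≤ i ∧ i < t}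

/-- A forward `t`-delay e-process under the class `𝒫₁`: a nonnegative process
`(R n)_{n ≥ t}` adapted to the forward filtration `σ(X_t, …, X_n)` such that for every
`F₁ ∈ 𝒫₁`, every law `Q` under which `X_t, X_{t+1}, …` are i.i.d. `F₁`, and every
stopping time `κ ≥ t` of the forward filtration, `E_Q[R_κ] ≤ 1`. -/
def IsForwardEProcess (𝒫₁ : Set (Measure 𝒳)) (t : ℕ) (R : ℕ → (ℕ → 𝒳) → ℝ≥0∞) : Prop :=
  (∀ n, t ≤ n → Measurable[fwdFilt 𝒳 t n] (R n)) ∧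
    ∀ F₁ ∈ 𝒫₁, ∀ Q : Measure (ℕ → 𝒳), IsIIDOn Q F₁ {i | t ≤ i} →
      ∀ κ : (ℕ → 𝒳) → ℕ, (∀ ω, t ≤ κ ω) →
        (∀ n, MeasurableSet[fwdFilt 𝒳 t n] {ω | κ ω ≤ n}) →
        ∫⁻ ω, R (κ ω) ω ∂Q ≤ 1

/-- A backward `t`-delay e-process under the class `𝒫₀`: a nonnegative process
`(S n)_{1 ≤ n < t}` adapted to the backward filtration `σ(X_n, …, X_{t-1})` such that for
every `F₀ ∈ 𝒫₀`, every law `Q` under which `X₁, …, X_{t-1}` are i.i.d. `F₀`, and every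
stopping time `κ` of the backward filtration with `1 ≤ κ < t`, `E_Q[S_κ] ≤ 1`. -/
def IsBackwardEProcess (𝒫₀ : Set (Measure 𝒳)) (t : ℕ) (S : ℕ → (ℕ → 𝒳) → ℝ≥0∞) : Prop :=
  (∀ n, 1 ≤ n → n < t → Measurable[bwdFilt 𝒳 t n] (S n)) ∧
    ∀ F₀ ∈ 𝒫₀, ∀ Q : Measure (ℕ → 𝒳), IsIIDOn Q F₀ {i | 1 ≤ i ∧ i < t} →
      ∀ κ : (ℕ → 𝒳) → ℕ, (∀ ω, 1 ≤ κ ω ∧ κ ω < t) →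
        (∀ n, MeasurableSet[bwdFilt 𝒳 t n] {ω | n ≤ κ ω}) →
        ∫⁻ ω, S (κ ω) ω ∂Q ≤ 1

/-- The localization statistic `M_t` built from the estimator `T̂`, forward e-processes `R`
and backward e-processes `S`: `M_t = R^{(t)}_{T̂ - 1}` if `t < T̂ ≤ τ < ∞`, `M_t = 1` if
`t = T̂ ≤ τ < ∞`, `M_t = S^{(t)}_{T̂}` if `T̂ < t ≤ τ < ∞`, and `M_t = -∞` if `t > τ` or
`τ = ∞`. -/
noncomputable def eStat (τ : (ℕ → 𝒳) → ℕ∞) (That : (ℕ → 𝒳) → ℕ)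
    (R S : ℕ → ℕ → (ℕ → 𝒳) → ℝ≥0∞) (t : ℕ) (ω : ℕ → 𝒳) : EReal :=
  if (t : ℕ∞) ≤ τ ω ∧ τ ω ≠ ⊤ then
    if t < That ω then ((R t (That ω - 1) ω : ℝ≥0∞) : EReal)
    else if t = That ω then 1
    else ((S t (That ω) ω : ℝ≥0∞) : EReal)
  else ⊥

/-- `Quantile(1 − c; v)`: the `⌈(1 − c)·|v|⌉`-th smallest of the values in `v`. -/
noncomputable def quantileStat (c : ℝ) (v : Multiset EReal) : EReal :=
  (v.sort (· ≤ ·)).getD (⌈(1 - c) * (v.card : ℝ)⌉₊ - 1) ⊥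

/-- Membership in the stopped confidence sequence `CS(X_t, …, X_τ; 1 − c)`:
`θ ∈ CS(X_t,…,X_n; 1−c)` whenever `τ = n` (vacuously true when `τ = ∞`). -/
def stoppedCSMem {𝒳 : Type*} [MeasurableSpace 𝒳] {Θ : Type*} (τ : (ℕ → 𝒳) → ℕ∞)
    (CSset : ℝ → ℕ → ℕ → (ℕ → 𝒳) → Set Θ) (c : ℝ) (t : ℕ) (ω : ℕ → 𝒳) (θ : Θ) : Prop :=
  ∀ n : ℕ, t ≤ n → τ ω = (n : ℕ∞) → θ ∈ CSset c t n ω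

section Aux

lemma coordSigma_le (s : Set ℕ) :
    coordSigma 𝒳 s ≤ (inferInstance : MeasurableSpace (ℕ → 𝒳)) := by
  refine iSup₂_le fun i _ => ?_
  exact measurable_iff_comap_le.mp (measurable_pi_apply i)

/-- Cylinder sets over coordinates in `s`. -/
def cyl (𝒳 : Type*) [MeasurableSpace 𝒳] (s : Set ℕ) : Set (Set (ℕ → 𝒳)) :=
  {B | ∃ (t : Finset ℕ) (A : ℕ → Set 𝒳), ↑t ⊆ s ∧ (∀ i, MeasurableSet (A i)) ∧
    B = {ω | ∀ i ∈ t, ω i ∈ A i}}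

lemma isPiSystem_cyl (s : Set ℕ) : IsPiSystem (cyl 𝒳 s) := by
  rintro B₁ ⟨t₁, A₁, ht₁, hA₁, rfl⟩ B₂ ⟨t₂, A₂, ht₂, hA₂, rfl⟩ -
  refine ⟨t₁ ∪ t₂,
    fun i => (if i ∈ t₁ then A₁ i else Set.univ) ∩ (if i ∈ t₂ then A₂ i else Set.univ),
    ?_, ?_, ?_⟩
  · rw [Finset.coe_union]; exact Set.union_subset ht₁ ht₂
  · intro i
    apply MeasurableSet.inter
    · split_ifs with h
      exacts [hA₁ i, MeasurableSet.univ]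
    · split_ifs with h
      exacts [hA₂ i, MeasurableSet.univ]
  · ext ω
    simp only [Set.mem_inter_iff, Set.mem_setOf_eq, Finset.mem_union]
    constructor
    · rintro ⟨h1, h2⟩ i hi
      constructor
      · split_ifs with h
        exacts [h1 i h, Set.mem_univ _]
      · split_ifs with h
        exacts [h2 i h, Set.mem_univ _]
    · intro h
      constructor
      · intro i hi
        have := (h i (Or.inl hi)).1
        rwa [if_pos hi] at this
      · intro i hi
        have := (h i (Or.inr hi)).2
        rwa [if_pos hi] at this

lemma coordSigma_eq_generateFrom (s : Set ℕ) :
    coordSigma 𝒳 s = MeasurableSpace.generateFrom (cyl 𝒳 s) := by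
  refine le_antisymm (iSup₂_le fun i hi => ?_) (MeasurableSpace.generateFrom_le ?_)
  · rintro B ⟨A, hA, rfl⟩
    refine MeasurableSpace.measurableSet_generateFrom
      ⟨{i}, fun _ => A, by simpa using hi, fun _ => hA, ?_⟩
    ext ω; simp
  · rintro B ⟨t, A, hts, hA, rfl⟩
    have hB : {ω : ℕ → 𝒳 | ∀ i ∈ t, ω i ∈ A i}
        = ⋂ i ∈ t, (fun ω : ℕ → 𝒳 => ω i) ⁻¹' A i := by
      ext ω; simp
    rw [hB]
    refine MeasurableSet.biInter t.countable_toSet fun i hi => ?_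
    have hle : MeasurableSpace.comap (fun ω : ℕ → 𝒳 => ω i) inferInstance
        ≤ coordSigma 𝒳 s :=
      le_iSup₂ (f := fun (i : ℕ) (_ : i ∈ s) =>
        MeasurableSpace.comap (fun ω : ℕ → 𝒳 => ω i) inferInstance) i (hts hi)
    exact hle _ ⟨A i, hA i, rfl⟩

lemma productLaw_eq_on {P P' : Measure (ℕ → 𝒳)} {ν ν' : ℕ → Measure 𝒳}
    (hP : IsProductLaw P ν) (hP' : IsProductLaw P' ν') (s : Set ℕ)
    (hs1 : ∀ i ∈ s, 1 ≤ i) (hνν' : ∀ i ∈ s, ν i = ν' i) :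
    ∀ ⦃B : Set (ℕ → 𝒳)⦄, MeasurableSet[coordSigma 𝒳 s] B → P B = P' B := by
  haveI := hP.1; haveI := hP'.1
  refine MeasurableSpace.induction_on_inter (m := coordSigma 𝒳 s)
    (coordSigma_eq_generateFrom s) (isPiSystem_cyl s) (by simp) ?_ ?_ ?_
  · rintro B ⟨t, A, hts, hA, rfl⟩
    rw [hP.2 t (fun i hi => hs1 i (hts hi)) A hA,
      hP'.2 t (fun i hi => hs1 i (hts hi)) A hA]
    exact Finset.prod_congr rfl fun i hi => by rw [hνν' i (hts hi)]
  · intro B hB hPB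
    have hB' : MeasurableSet B := coordSigma_le s _ hB
    rw [measure_compl hB' (measure_ne_top _ _), measure_compl hB' (measure_ne_top _ _),
      measure_univ, measure_univ, hPB]
  · intro f hdisj hmeas hPf
    have hmeas' : ∀ i, MeasurableSet (f i) := fun i => coordSigma_le s _ (hmeas i)
    rw [measure_iUnion hdisj hmeas', measure_iUnion hdisj hmeas']
    exact tsum_congr hPf

lemma geT_eq_compl (τ : (ℕ → 𝒳) → ℕ∞) (T : ℕ) (hT : 1 ≤ T) :
    {ω : ℕ → 𝒳 | (T : ℕ∞) ≤ τ ω} = {ω | τ ω ≤ ((T - 1 : ℕ) : ℕ∞)}ᶜ := by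
  have hid : (T : ℕ∞) = ((T - 1 : ℕ) : ℕ∞) + 1 := by
    have h := Nat.sub_add_cancel hT
    calc (T : ℕ∞) = ((T - 1 + 1 : ℕ) : ℕ∞) := by rw [h]
      _ = ((T - 1 : ℕ) : ℕ∞) + 1 := by rw [Nat.cast_add, Nat.cast_one]
  ext ω
  rw [Set.mem_compl_iff, Set.mem_setOf_eq, Set.mem_setOf_eq, not_le, hid,
    ENat.add_one_le_iff (by simp : ((T - 1 : ℕ) : ℕ∞) ≠ ⊤)]

end Aux

/-- Post-detection confidence set for the post-change parameter: if `C`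
is any random subset of `{1,…,τ}` with conditional coverage
`P_{θ₀,T,θ₁}(T ∈ C | τ ≥ T) ≥ 1 − α` (for all `θ₀ ∈ Θ₀`, `θ₁ ∈ Θ₁`, `T` with
`P_{θ₀,∞}(τ ≥ T) > 0`), where `τ` satisfies Assumption 1, then for every `η₁ ∈ (0,1)`
and every `T`,
`P_{θ₀,T,θ₁}(θ₁ ∈ ⋃_{t∈C} CS(X_t,…,X_τ; 1 − η₁ r_t*) | τ ≥ T) ≥ 1 − α − η₁`. -/
theorem postchange_parameter_confidence
    {𝒳 : Type*} [MeasurableSpace 𝒳] {Θ : Type*}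
    (Θ₀ Θ₁ : Set Θ) (hdisj : Disjoint Θ₀ Θ₁) (F : Θ → Measure 𝒳)
    (τ : (ℕ → 𝒳) → ℕ∞) (hτ : IsStoppingTimeSeq τ)
    -- Assumption 1: least favorable pre-change parameter θ₀*
    (θ₀s : Θ) (hθ₀s : θ₀s ∈ Θ₀)
    (Pinfs : Measure (ℕ → 𝒳)) (hPinfs : IsNoChangeLaw Pinfs (F θ₀s))
    (hass1 : ∀ θ ∈ Θ₀, ∀ t : ℕ, ∀ Pinf' : Measure (ℕ → 𝒳), IsNoChangeLaw Pinf' (F θ) →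
      Pinfs {ω | (t : ℕ∞) ≤ τ ω} ≤ Pinf' {ω | (t : ℕ∞) ≤ τ ω})
    -- the auxiliary randomization carrying the estimators `r_t*`
    {Ωr : Type*} [MeasurableSpace Ωr] (μr : Measure Ωr) [IsProbabilityMeasure μr]
    (r : ℕ → Ωr → ℝ) (hrmeas : ∀ t, Measurable (r t))
    (hrpos : ∀ t, ∀ᵐ a ∂μr, 0 < r t a) (hrint : ∀ t, Integrable (r t) μr)
    (hrunb : ∀ t : ℕ, ∫ a, r t a ∂μr = (Pinfs {ω | (t : ℕ∞) ≤ τ ω}).toReal)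
    (α : ℝ) (hα : α ∈ Set.Ioo (0 : ℝ) 1)
    -- the confidence set `C ⊆ {1,…,τ}` for the changepoint
    (C : (ℕ → 𝒳) × Ωr → Set ℕ)
    (hCmeas : ∀ t : ℕ, MeasurableSet {q : (ℕ → 𝒳) × Ωr | t ∈ C q})
    (hCsub : ∀ q, ∀ t ∈ C q, 1 ≤ t ∧ (t : ℕ∞) ≤ τ q.1)
    (hCcov : ∀ θ₀ ∈ Θ₀, ∀ θ₁ ∈ Θ₁, ∀ T : ℕ, 1 ≤ T →
      ∀ P Pinf₀ : Measure (ℕ → 𝒳), IsChangeLaw P (F θ₀) (F θ₁) T →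
        IsNoChangeLaw Pinf₀ (F θ₀) → Pinf₀ {ω | (T : ℕ∞) ≤ τ ω} ≠ 0 →
        ENNReal.ofReal (1 - α) ≤
          ProbabilityTheory.cond (P.prod μr) {q | (T : ℕ∞) ≤ τ q.1} {q | T ∈ C q})
    -- the confidence sequence procedure for the post-change parameter
    (CSset : ℝ → ℕ → ℕ → (ℕ → 𝒳) → Set Θ)
    (hCSmeas : ∀ (t n : ℕ) (θ : Θ),
      MeasurableSet {q : (ℕ → 𝒳) × ℝ | θ ∈ CSset q.2 t n q.1})
    (hCS : ∀ c : ℝ, c ∈ Set.Ioo (0 : ℝ) 1 → ∀ t : ℕ, 1 ≤ t → ∀ θ₀ ∈ Θ₀, ∀ θ₁ ∈ Θ₁,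
      ∀ P : Measure (ℕ → 𝒳), IsChangeLaw P (F θ₀) (F θ₁) t →
        ENNReal.ofReal (1 - c) ≤ P {ω | ∀ n : ℕ, t ≤ n → θ₁ ∈ CSset c t n ω})
    (η₁ : ℝ) (hη₁ : η₁ ∈ Set.Ioo (0 : ℝ) 1)
    (θ₀ : Θ) (hθ₀ : θ₀ ∈ Θ₀) (θ₁ : Θ) (hθ₁ : θ₁ ∈ Θ₁)
    (T : ℕ) (hT : 1 ≤ T)
    (P Pinf₀ : Measure (ℕ → 𝒳)) (hP : IsChangeLaw P (F θ₀) (F θ₁) T)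
    (hPinf₀ : IsNoChangeLaw Pinf₀ (F θ₀))
    (hpos : Pinf₀ {ω | (T : ℕ∞) ≤ τ ω} ≠ 0) :
    ENNReal.ofReal (1 - α - η₁) ≤
      ProbabilityTheory.cond (P.prod μr) {q : (ℕ → 𝒳) × Ωr | (T : ℕ∞) ≤ τ q.1}
        {q : (ℕ → 𝒳) × Ωr |
          θ₁ ∈ ⋃ t ∈ C q, {θ : Θ | stoppedCSMem τ CSset (η₁ * r t q.2) t q.1 θ}} := by
  haveI hPprob : IsProbabilityMeasure P := hP.1
  haveI : IsProbabilityMeasure Pinf₀ := hPinf₀.1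
  haveI : IsProbabilityMeasure Pinfs := hPinfs.1
  set Aω : Set (ℕ → 𝒳) := {ω | (T : ℕ∞) ≤ τ ω} with hAωdef
  -- measurability of the conditioning event
  have hAmeas_filt : MeasurableSet[natFilt 𝒳 (T - 1)] Aω := by
    rw [hAωdef, geT_eq_compl τ T hT]
    exact (hτ (T - 1)).compl
  have hAmeas : MeasurableSet Aω := coordSigma_le _ _ hAmeas_filt
  -- the change law and the no-change law agree on pre-change events
  have hPA_eq : P Aω = Pinf₀ Aω := by
    refine productLaw_eq_on hP hPinf₀ {i | 1 ≤ i ∧ i ≤ T - 1}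
      (fun i hi => hi.1) ?_ hAmeas_filt
    rintro i ⟨h1, h2⟩
    simp only [if_pos (show i < T by omega)]
  have hPA_ne_top : P Aω ≠ ⊤ := measure_ne_top _ _
  have hPA_ne : P Aω ≠ 0 := by rw [hPA_eq]; exact hpos
  -- the conditioning event in the product space
  set AQ : Set ((ℕ → 𝒳) × Ωr) := {q | (T : ℕ∞) ≤ τ q.1} with hAQdef
  have hAQ_eq : AQ = Aω ×ˢ (Set.univ : Set Ωr) := by
    ext q; simp [hAQdef, hAωdef]
  have hAQmeas : MeasurableSet AQ := by
    rw [hAQ_eq]; exact hAmeas.prod MeasurableSet.univ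
  have hQA : (P.prod μr) AQ = P Aω := by
    rw [hAQ_eq, Measure.prod_prod, measure_univ, mul_one]
  -- the good event: the CS at time T covers θ₁ at all horizons
  set G : Set ((ℕ → 𝒳) × Ωr) :=
    {q | ∀ n, T ≤ n → θ₁ ∈ CSset (η₁ * r T q.2) T n q.1} with hGdef
  have hGmeas : MeasurableSet G := by
    have hG : G = ⋂ n, ⋂ (_ : T ≤ n),
        (fun q : (ℕ → 𝒳) × Ωr => (q.1, η₁ * r T q.2)) ⁻¹'
          {p : (ℕ → 𝒳) × ℝ | θ₁ ∈ CSset p.2 T n p.1} := by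
      ext q; simp [hGdef]
    rw [hG]
    refine MeasurableSet.iInter fun n => MeasurableSet.iInter fun _ => ?_
    exact (measurable_fst.prodMk
      (measurable_const.mul ((hrmeas T).comp measurable_snd))) (hCSmeas T n θ₁)
  -- bound on the bad event
  have hD : (P.prod μr) Gᶜ ≤ ENNReal.ofReal η₁ * P Aω := by
    have hslice : ∀ᵐ a ∂μr,
        P ((fun ω => (ω, a)) ⁻¹' Gᶜ) ≤ ENNReal.ofReal (η₁ * r T a) := by
      filter_upwards [hrpos T] with a hra
      set c := η₁ * r T a with hcdef
      have hc0 : 0 < c := mul_pos hη₁.1 hra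
      have hGa : (fun ω => (ω, a)) ⁻¹' Gᶜ
          = {ω | ∀ n, T ≤ n → θ₁ ∈ CSset c T n ω}ᶜ := by
        ext ω; simp [hGdef, hcdef]
      have hGa_meas : MeasurableSet {ω | ∀ n, T ≤ n → θ₁ ∈ CSset c T n ω} := by
        have : {ω | ∀ n, T ≤ n → θ₁ ∈ CSset c T n ω} = ⋂ n, ⋂ (_ : T ≤ n),
            (fun ω : ℕ → 𝒳 => (ω, c)) ⁻¹' {p : (ℕ → 𝒳) × ℝ | θ₁ ∈ CSset p.2 T n p.1} := by
          ext ω; simp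
        rw [this]
        refine MeasurableSet.iInter fun n => MeasurableSet.iInter fun _ => ?_
        exact (measurable_id.prodMk measurable_const) (hCSmeas T n θ₁)
      by_cases hc1 : c < 1
      · have hcov := hCS c ⟨hc0, hc1⟩ T hT θ₀ hθ₀ θ₁ hθ₁ P hP
        rw [hGa, measure_compl hGa_meas (measure_ne_top _ _), measure_univ]
        calc 1 - P {ω | ∀ n, T ≤ n → θ₁ ∈ CSset c T n ω}
            ≤ 1 - ENNReal.ofReal (1 - c) := tsub_le_tsub_left hcov 1
          _ = ENNReal.ofReal c := by
              rw [← ENNReal.ofReal_one, ← ENNReal.ofReal_sub 1 (by linarith)]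
              norm_num
      · calc P ((fun ω => (ω, a)) ⁻¹' Gᶜ) ≤ P Set.univ := measure_mono (Set.subset_univ _)
          _ = 1 := measure_univ
          _ ≤ ENNReal.ofReal c := ENNReal.one_le_ofReal.mpr (le_of_not_gt hc1)
    calc (P.prod μr) Gᶜ = ∫⁻ a, P ((fun ω => (ω, a)) ⁻¹' Gᶜ) ∂μr :=
          Measure.prod_apply_symm hGmeas.compl
      _ ≤ ∫⁻ a, ENNReal.ofReal (η₁ * r T a) ∂μr := lintegral_mono_ae hslice
      _ = ENNReal.ofReal (∫ a, η₁ * r T a ∂μr) := by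
          rw [ofReal_integral_eq_lintegral_ofReal ((hrint T).const_mul η₁)]
          filter_upwards [hrpos T] with a hra
          exact le_of_lt (mul_pos hη₁.1 hra)
      _ = ENNReal.ofReal η₁ * Pinfs Aω := by
          rw [integral_const_mul, hrunb T, ENNReal.ofReal_mul (le_of_lt hη₁.1),
            ENNReal.ofReal_toReal (measure_ne_top _ _)]
      _ ≤ ENNReal.ofReal η₁ * Pinf₀ Aω :=
          mul_le_mul_right (hass1 θ₀ hθ₀ T Pinf₀ hPinf₀) _
      _ = ENNReal.ofReal η₁ * P Aω := by rw [hPA_eq]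
  -- coverage of the changepoint confidence set
  have hBc := hCcov θ₀ hθ₀ θ₁ hθ₁ T hT P Pinf₀ hP hPinf₀ hpos
  rw [ProbabilityTheory.cond_apply hAQmeas] at hBc
  have h1 : ENNReal.ofReal (1 - α) * P Aω ≤ (P.prod μr) (AQ ∩ {q | T ∈ C q}) := by
    calc ENNReal.ofReal (1 - α) * P Aω
        ≤ (((P.prod μr) AQ)⁻¹ * (P.prod μr) (AQ ∩ {q | T ∈ C q})) * P Aω :=
          mul_le_mul_left hBc _
      _ = (P.prod μr) (AQ ∩ {q | T ∈ C q}) * ((P Aω)⁻¹ * P Aω) := by rw [hQA]; ring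
      _ = (P.prod μr) (AQ ∩ {q | T ∈ C q}) := by
          rw [ENNReal.inv_mul_cancel hPA_ne hPA_ne_top, mul_one]
  -- inclusion: coverage of T and CS coverage imply coverage of θ₁
  set Btgt : Set ((ℕ → 𝒳) × Ωr) :=
    {q | θ₁ ∈ ⋃ t ∈ C q, {θ : Θ | stoppedCSMem τ CSset (η₁ * r t q.2) t q.1 θ}} with hBtgtdef
  have hincl : AQ ∩ {q | T ∈ C q} ⊆ (AQ ∩ Btgt) ∪ Gᶜ := by
    rintro q ⟨hqA, hqC⟩
    by_cases hG : q ∈ G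
    · left
      refine ⟨hqA, ?_⟩
      refine Set.mem_iUnion₂.mpr ⟨T, hqC, ?_⟩
      intro n hn _
      exact hG n hn
    · right; exact hG
  have h2 : (P.prod μr) (AQ ∩ {q | T ∈ C q})
      ≤ (P.prod μr) (AQ ∩ Btgt) + (P.prod μr) Gᶜ :=
    le_trans (measure_mono hincl) (measure_union_le _ _)
  -- combine
  rcases le_or_gt (1 - α - η₁) 0 with h0 | h0
  · rw [ENNReal.ofReal_eq_zero.mpr h0]
    exact zero_le
  · have hsplit : ENNReal.ofReal (1 - α)
        = ENNReal.ofReal (1 - α - η₁) + ENNReal.ofReal η₁ := by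
      rw [← ENNReal.ofReal_add (le_of_lt h0) (le_of_lt hη₁.1)]
      ring_nf
    have key : ENNReal.ofReal (1 - α - η₁) * P Aω ≤ (P.prod μr) (AQ ∩ Btgt) := by
      have hchain : ENNReal.ofReal (1 - α - η₁) * P Aω + ENNReal.ofReal η₁ * P Aω
          ≤ (P.prod μr) (AQ ∩ Btgt) + ENNReal.ofReal η₁ * P Aω := by
        calc ENNReal.ofReal (1 - α - η₁) * P Aω + ENNReal.ofReal η₁ * P Aω
            = ENNReal.ofReal (1 - α) * P Aω := by rw [hsplit, add_mul]
          _ ≤ (P.prod μr) (AQ ∩ {q | T ∈ C q}) := h1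
          _ ≤ (P.prod μr) (AQ ∩ Btgt) + (P.prod μr) Gᶜ := h2
          _ ≤ (P.prod μr) (AQ ∩ Btgt) + ENNReal.ofReal η₁ * P Aω :=
              add_le_add_right hD _
      exact (ENNReal.add_le_add_iff_right
        (ENNReal.mul_ne_top ENNReal.ofReal_ne_top hPA_ne_top)).mp hchain
    rw [ProbabilityTheory.cond_apply hAQmeas, hQA]
    calc ENNReal.ofReal (1 - α - η₁)
        = (P Aω)⁻¹ * (ENNReal.ofReal (1 - α - η₁) * P Aω) := by
          rw [mul_comm (ENNReal.ofReal (1 - α - η₁)) (P Aω), ← mul_assoc,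
            ENNReal.inv_mul_cancel hPA_ne hPA_ne_top, one_mul]
      _ ≤ (P Aω)⁻¹ * (P.prod μr) (AQ ∩ Btgt) := mul_le_mul_right key _

end SeqChange
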